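/- For all ν ≥ 0 and all x > 0 the Turán type inequality I_{ν+1}²(x) − I_ν(x)·I_{ν+2}(x) < ((2ν+1)/x)·I_ν(x)·I_{ν+1}(x) holds. -/

import Mathlib

open Real Filter Topology

open Finset Polynomial

/-- The modified Bessel function of the first kind of real order `ν`. -/
noncomputable def besselI (ν x : ℝ) : ℝ :=
  ∑' m : ℕ, (x / 2) ^ (2 * (m : ℝ) + ν) / ((m.factorial : ℝ) * Real.Gamma ((m : ℝ) + ν + 1))

/-- `Ψ_ν(x) = I_{ν+1}(x) / I_ν(x)`. -/
noncomputable def psi (ν x : ℝ) : ℝ := besselI (ν + 1) x / besselI ν x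

lemma smeval_descPoch (k : ℕ) (r : ℝ) :
    (descPochhammer ℤ k).smeval r = (descPochhammer ℝ k).eval r := by
  rw [← aeval_eq_smeval, aeval_def, ← eval_map, descPochhammer_map]

lemma descPoch_eval_gamma (k : ℕ) (z : ℝ) (h : 0 < z + 1 - k) :
    (descPochhammer ℝ k).eval z = Real.Gamma (z + 1) / Real.Gamma (z + 1 - k) := by
  induction k with
  | zero =>
    simp only [descPochhammer_zero, eval_one, Nat.cast_zero, sub_zero]
    rw [div_self (Real.Gamma_pos_of_pos (by simpa using h)).ne']
  | succ k ih =>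
    have hk : (0:ℝ) < z + 1 - k := by push_cast at h ⊢; linarith
    have hzk : (0:ℝ) < z - k := by push_cast at h ⊢; linarith
    rw [descPochhammer_succ_eval, ih hk]
    have h1 : z + 1 - (k:ℝ) = (z - k) + 1 := by ring
    rw [h1, Real.Gamma_add_one hzk.ne']
    have h2 : z + 1 - ((k:ℕ)+1 : ℕ) = z - k := by push_cast; ring
    rw [h2]
    field_simp

lemma real_vandermonde (k : ℕ) (r s : ℝ) :
    (descPochhammer ℝ k).eval (r + s) = ∑ ij ∈ Finset.HasAntidiagonal.antidiagonal k,
      (k.choose ij.1 : ℝ) * ((descPochhammer ℝ ij.1).eval r * (descPochhammer ℝ ij.2).eval s) := by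
  have h := Ring.descPochhammer_smeval_add (R := ℝ) (r := r) (s := s) k (Commute.all r s)
  simpa only [smeval_descPoch] using h

lemma vdm (n : ℕ) (a b : ℝ) (ha : 0 ≤ a) (hb : 0 ≤ b) :
    ∑ ij ∈ Finset.HasAntidiagonal.antidiagonal n,
      (1 / (ij.1.factorial * Real.Gamma (ij.1 + a + 1))) *
      (1 / (ij.2.factorial * Real.Gamma (ij.2 + b + 1)))
    = Real.Gamma (2*n + a + b + 1) /
        (n.factorial * Real.Gamma (n + a + 1) * Real.Gamma (n + b + 1) * Real.Gamma (n + a + b + 1)) := by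
  have hGapos : (0:ℝ) < Real.Gamma (n + a + 1) := Real.Gamma_pos_of_pos (by positivity)
  have hGbpos : (0:ℝ) < Real.Gamma (n + b + 1) := Real.Gamma_pos_of_pos (by positivity)
  have hGabpos : (0:ℝ) < Real.Gamma (n + a + b + 1) := Real.Gamma_pos_of_pos (by positivity)
  have hfn : (0:ℝ) < n.factorial := by exact_mod_cast Nat.factorial_pos n
  have hV' : Real.Gamma (2*n + a + b + 1) / Real.Gamma (n + a + b + 1)
      = ∑ ij ∈ Finset.HasAntidiagonal.antidiagonal n, (n.choose ij.1 : ℝ) *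
          (Real.Gamma (n + b + 1) / Real.Gamma (ij.2 + b + 1) *
           (Real.Gamma (n + a + 1) / Real.Gamma (ij.1 + a + 1))) := by
    have hV := real_vandermonde n (b + n) (a + n)
    have hL : (b + (n:ℝ)) + (a + n) = a + b + 2*n := by ring
    rw [hL, descPoch_eval_gamma n _ (by push_cast; linarith)] at hV
    have hab1 : a + b + 2*(n:ℝ) + 1 - n = n + a + b + 1 := by ring
    have harg : a + b + 2*(n:ℝ) + 1 = 2*n + a + b + 1 := by ring
    rw [hab1, harg] at hV
    rw [hV]
    refine Finset.sum_congr rfl fun ij hij => ?_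
    have hmem := Finset.HasAntidiagonal.mem_antidiagonal.mp hij
    have hi : (ij.1 : ℝ) ≤ n := by exact_mod_cast le_of_add_le_left hmem.le
    have hj : (ij.2 : ℝ) ≤ n := by exact_mod_cast le_of_add_le_right hmem.le
    have hcast : (ij.1 : ℝ) + ij.2 = n := by exact_mod_cast congrArg Nat.cast hmem
    rw [descPoch_eval_gamma ij.1 (b + n) (by linarith),
        descPoch_eval_gamma ij.2 (a + n) (by linarith)]
    have e1 : b + (n:ℝ) + 1 - ij.1 = ij.2 + b + 1 := by linarith
    have e2 : a + (n:ℝ) + 1 - ij.2 = ij.1 + a + 1 := by linarith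
    have e3 : b + (n:ℝ) + 1 = n + b + 1 := by ring
    have e4 : a + (n:ℝ) + 1 = n + a + 1 := by ring
    rw [e1, e2, e3, e4]
  have hV2 : ∑ ij ∈ Finset.HasAntidiagonal.antidiagonal n,
      (1 / (ij.1.factorial * Real.Gamma (ij.1 + a + 1))) *
      (1 / (ij.2.factorial * Real.Gamma (ij.2 + b + 1)))
      = (Real.Gamma (2*n + a + b + 1) / Real.Gamma (n + a + b + 1)) /
          (n.factorial * Real.Gamma (n + a + 1) * Real.Gamma (n + b + 1)) := by
    rw [eq_div_iff (by positivity), Finset.sum_mul, hV']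
    refine Finset.sum_congr rfl fun ij hij => ?_
    have hmem := Finset.HasAntidiagonal.mem_antidiagonal.mp hij
    have hchoose : (n.choose ij.1 : ℝ) * ij.1.factorial * ij.2.factorial = n.factorial := by
      have h1 : ij.1 ≤ n := le_of_add_le_left hmem.le
      have := Nat.choose_mul_factorial_mul_factorial h1
      rw [show n - ij.1 = ij.2 by omega] at this
      exact_mod_cast this
    have hG1 : (0:ℝ) < Real.Gamma (ij.1 + a + 1) := Real.Gamma_pos_of_pos (by positivity)
    have hG2 : (0:ℝ) < Real.Gamma (ij.2 + b + 1) := Real.Gamma_pos_of_pos (by positivity)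
    have hf1 : (0:ℝ) < ij.1.factorial := by exact_mod_cast Nat.factorial_pos _
    have hf2 : (0:ℝ) < ij.2.factorial := by exact_mod_cast Nat.factorial_pos _
    field_simp
    linear_combination -hchoose
  rw [hV2, div_div]
  ring

lemma summable_f {q a : ℝ} (hq : 0 ≤ q) (ha : 0 ≤ a) :
    Summable (fun m : ℕ => q ^ m / (m.factorial * Real.Gamma (m + a + 1))) := by
  apply summable_of_ratio_norm_eventually_le (r := 1/2) (by norm_num)
  filter_upwards [eventually_ge_atTop ⌈2*q⌉₊] with m hm
  have hGpos : (0:ℝ) < Real.Gamma (m + a + 1) := Real.Gamma_pos_of_pos (by positivity)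
  have hfpos : (0:ℝ) < m.factorial := by exact_mod_cast Nat.factorial_pos m
  have hterm : (0:ℝ) ≤ q ^ m / (m.factorial * Real.Gamma (m + a + 1)) := by positivity
  have hrec : Real.Gamma ((m:ℝ) + 1 + a + 1) = ((m:ℝ) + a + 1) * Real.Gamma ((m:ℝ) + a + 1) := by
    rw [show (m:ℝ) + 1 + a + 1 = ((m:ℝ) + a + 1) + 1 by ring, Real.Gamma_add_one (by positivity)]
  have hfs : ((m+1).factorial : ℝ) = (m+1) * m.factorial := by
    rw [Nat.factorial_succ]; push_cast; ring
  have hq2 : 2 * q ≤ (m:ℝ) := by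
    calc 2*q ≤ (⌈2*q⌉₊ : ℝ) := Nat.le_ceil _
    _ ≤ m := by exact_mod_cast hm
  rw [Real.norm_of_nonneg (by positivity), Real.norm_of_nonneg hterm]
  push_cast [hfs]
  rw [hrec, pow_succ]
  have key : q ^ m * q / ((((m:ℝ)+1) * m.factorial) * (((m:ℝ) + a + 1) * Real.Gamma ((m:ℝ)+a+1)))
      = (q ^ m / (m.factorial * Real.Gamma ((m:ℝ)+a+1))) * (q / (((m:ℝ)+1) * ((m:ℝ)+a+1))) := by
    rw [div_mul_div_comm]
    congr 1
    ring
  rw [key]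
  have hfrac : q / (((m:ℝ)+1) * ((m:ℝ)+a+1)) ≤ 1/2 := by
    rw [div_le_div_iff₀ (by positivity) (by norm_num)]
    nlinarith
  calc q ^ m / (m.factorial * Real.Gamma ((m:ℝ)+a+1)) * (q / (((m:ℝ)+1) * ((m:ℝ)+a+1)))
      ≤ q ^ m / (m.factorial * Real.Gamma ((m:ℝ)+a+1)) * (1/2) := by
        apply mul_le_mul_of_nonneg_left hfrac hterm
    _ = 1/2 * (q ^ m / (m.factorial * Real.Gamma ((m:ℝ)+a+1))) := by ring

lemma besselI_eq {ν x : ℝ} (hx : 0 < x) :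
    besselI ν x = (x/2) ^ ν * ∑' m : ℕ, ((x/2)^2) ^ m / (m.factorial * Real.Gamma (m + ν + 1)) := by
  have ht : (0:ℝ) < x/2 := by linarith
  rw [besselI, ← tsum_mul_left]
  refine tsum_congr fun m => ?_
  rw [Real.rpow_add ht]
  have h1 : (x/2) ^ (2 * (m:ℝ)) = ((x/2)^2) ^ m := by
    rw [show 2 * (m:ℝ) = ((2*m : ℕ) : ℝ) by push_cast; ring, Real.rpow_natCast, pow_mul]
  rw [h1]
  field_simp

/-- the closed-form Cauchy-product coefficient -/
noncomputable def R (n : ℕ) (a b : ℝ) : ℝ :=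
  Real.Gamma (2*n + a + b + 1) /
    (n.factorial * Real.Gamma (n + a + 1) * Real.Gamma (n + b + 1) * Real.Gamma (n + a + b + 1))

lemma summable_norm_f {q a : ℝ} (hq : 0 ≤ q) (ha : 0 ≤ a) :
    Summable (fun m : ℕ => ‖q ^ m / (m.factorial * Real.Gamma (m + a + 1))‖) := by
  refine (summable_f hq ha).congr fun m => ?_
  have hGpos : (0:ℝ) < Real.Gamma (m + a + 1) := Real.Gamma_pos_of_pos (by positivity)
  have hfpos : (0:ℝ) < m.factorial := by exact_mod_cast Nat.factorial_pos m
  rw [Real.norm_of_nonneg (by positivity)]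

lemma antidiag_sum_eq {q a b : ℝ} (hq : 0 ≤ q) (ha : 0 ≤ a) (hb : 0 ≤ b) (n : ℕ) :
    ∑ kl ∈ Finset.HasAntidiagonal.antidiagonal n,
      (q ^ kl.1 / (kl.1.factorial * Real.Gamma (kl.1 + a + 1))) *
      (q ^ kl.2 / (kl.2.factorial * Real.Gamma (kl.2 + b + 1)))
    = q ^ n * R n a b := by
  rw [R, ← vdm n a b ha hb, Finset.mul_sum]
  refine Finset.sum_congr rfl fun kl hkl => ?_
  have hmem := Finset.HasAntidiagonal.mem_antidiagonal.mp hkl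
  rw [← hmem, pow_add]
  field_simp

lemma summable_R {q a b : ℝ} (hq : 0 ≤ q) (ha : 0 ≤ a) (hb : 0 ≤ b) :
    Summable (fun n : ℕ => q ^ n * R n a b) := by
  have h := summable_norm_sum_mul_antidiagonal_of_summable_norm
    (f := fun m : ℕ => q ^ m / (m.factorial * Real.Gamma (m + a + 1)))
    (g := fun m : ℕ => q ^ m / (m.factorial * Real.Gamma (m + b + 1)))
    (summable_norm_f hq ha) (summable_norm_f hq hb)
  exact h.of_norm.congr fun n => antidiag_sum_eq hq ha hb n

lemma mul_f_eq {q a b : ℝ} (hq : 0 ≤ q) (ha : 0 ≤ a) (hb : 0 ≤ b) :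
    (∑' m : ℕ, q ^ m / (m.factorial * Real.Gamma (m + a + 1))) *
    (∑' m : ℕ, q ^ m / (m.factorial * Real.Gamma (m + b + 1)))
    = ∑' n : ℕ, q ^ n * R n a b := by
  rw [tsum_mul_tsum_eq_tsum_sum_antidiagonal_of_summable_norm
    (summable_norm_f hq ha) (summable_norm_f hq hb)]
  exact tsum_congr (antidiag_sum_eq hq ha hb)

lemma bessel_mul {a b x : ℝ} (ha : 0 ≤ a) (hb : 0 ≤ b) (hx : 0 < x) :
    besselI a x * besselI b x = (x/2) ^ a * (x/2) ^ b * ∑' n : ℕ, ((x/2)^2) ^ n * R n a b := by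
  have hq : (0:ℝ) ≤ (x/2)^2 := by positivity
  rw [besselI_eq hx, besselI_eq hx, ← mul_f_eq hq ha hb]
  ring

lemma R_pos (n : ℕ) {a b : ℝ} (ha : 0 ≤ a) (hb : 0 ≤ b) : 0 < R n a b := by
  have h1 : 0 < Real.Gamma (2*(n:ℝ) + a + b + 1) := Real.Gamma_pos_of_pos (by positivity)
  have h2 : 0 < Real.Gamma ((n:ℝ) + a + 1) := Real.Gamma_pos_of_pos (by positivity)
  have h3 : 0 < Real.Gamma ((n:ℝ) + b + 1) := Real.Gamma_pos_of_pos (by positivity)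
  have h4 : 0 < Real.Gamma ((n:ℝ) + a + b + 1) := Real.Gamma_pos_of_pos (by positivity)
  have h5 : (0:ℝ) < n.factorial := by exact_mod_cast Nat.factorial_pos n
  rw [R]; positivity

set_option maxHeartbeats 1000000 in
lemma coeff_ineq (n : ℕ) {ν : ℝ} (hν : 0 ≤ ν) :
    R n (ν+1) (ν+1) - R n ν (ν+2) ≤ (2*ν+1)/2 * R (n+1) ν (ν+1) := by
  have hg : 0 < Real.Gamma ((n:ℝ)+ν+1) := Real.Gamma_pos_of_pos (by positivity)
  have hG : 0 < Real.Gamma (2*(n:ℝ)+2*ν+3) := Real.Gamma_pos_of_pos (by positivity)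
  have hH : 0 < Real.Gamma ((n:ℝ)+2*ν+3) := Real.Gamma_pos_of_pos (by positivity)
  have hF : (0:ℝ) < n.factorial := by exact_mod_cast Nat.factorial_pos n
  have E1 : Real.Gamma ((n:ℝ) + (ν+1) + 1) = ((n:ℝ)+ν+1) * Real.Gamma ((n:ℝ)+ν+1) := by
    rw [show (n:ℝ) + (ν+1) + 1 = ((n:ℝ)+ν+1)+1 by ring, Real.Gamma_add_one (by positivity)]
  have E2 : Real.Gamma ((n:ℝ) + (ν+2) + 1) = ((n:ℝ)+ν+2) * (((n:ℝ)+ν+1) * Real.Gamma ((n:ℝ)+ν+1)) := by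
    rw [show (n:ℝ) + (ν+2) + 1 = ((n:ℝ)+ν+2)+1 by ring, Real.Gamma_add_one (by positivity),
        show (n:ℝ)+ν+2 = ((n:ℝ)+ν+1)+1 by ring, Real.Gamma_add_one (by positivity)]
  have E3 : Real.Gamma ((n:ℝ) + ν + (ν+2) + 1) = Real.Gamma ((n:ℝ)+2*ν+3) := by
    rw [show (n:ℝ) + ν + (ν+2) + 1 = (n:ℝ)+2*ν+3 by ring]
  have E4 : Real.Gamma ((n:ℝ) + (ν+1) + (ν+1) + 1) = Real.Gamma ((n:ℝ)+2*ν+3) := by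
    rw [show (n:ℝ) + (ν+1) + (ν+1) + 1 = (n:ℝ)+2*ν+3 by ring]
  have E5 : Real.Gamma (2*(n:ℝ) + (ν+1) + (ν+1) + 1) = Real.Gamma (2*(n:ℝ)+2*ν+3) := by
    rw [show 2*(n:ℝ) + (ν+1) + (ν+1) + 1 = 2*(n:ℝ)+2*ν+3 by ring]
  have E6 : Real.Gamma (2*(n:ℝ) + ν + (ν+2) + 1) = Real.Gamma (2*(n:ℝ)+2*ν+3) := by
    rw [show 2*(n:ℝ) + ν + (ν+2) + 1 = 2*(n:ℝ)+2*ν+3 by ring]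
  -- expansions for R (n+1) ν (ν+1)
  have F1 : Real.Gamma (2*((n:ℝ)+1) + ν + (ν+1) + 1)
      = (2*(n:ℝ)+2*ν+3) * Real.Gamma (2*(n:ℝ)+2*ν+3) := by
    rw [show 2*((n:ℝ)+1) + ν + (ν+1) + 1 = (2*(n:ℝ)+2*ν+3)+1 by ring,
        Real.Gamma_add_one (by positivity)]
  have F2 : Real.Gamma ((n:ℝ)+1 + ν + 1) = ((n:ℝ)+ν+1) * Real.Gamma ((n:ℝ)+ν+1) := by
    rw [show (n:ℝ)+1 + ν + 1 = ((n:ℝ)+ν+1)+1 by ring, Real.Gamma_add_one (by positivity)]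
  have F3 : Real.Gamma ((n:ℝ)+1 + (ν+1) + 1) = ((n:ℝ)+ν+2) * (((n:ℝ)+ν+1) * Real.Gamma ((n:ℝ)+ν+1)) := by
    rw [show (n:ℝ)+1 + (ν+1) + 1 = ((n:ℝ)+ν+2)+1 by ring, Real.Gamma_add_one (by positivity),
        show (n:ℝ)+ν+2 = ((n:ℝ)+ν+1)+1 by ring, Real.Gamma_add_one (by positivity)]
  have F4 : Real.Gamma ((n:ℝ)+1 + ν + (ν+1) + 1) = Real.Gamma ((n:ℝ)+2*ν+3) := by
    rw [show (n:ℝ)+1 + ν + (ν+1) + 1 = (n:ℝ)+2*ν+3 by ring]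
  set g := Real.Gamma ((n:ℝ)+ν+1) with hgdef
  set G := Real.Gamma (2*(n:ℝ)+2*ν+3) with hGdef
  set H := Real.Gamma ((n:ℝ)+2*ν+3) with hHdef
  set D := (n.factorial : ℝ) * g^2 * H * ((n:ℝ)+ν+1)^2 * ((n:ℝ)+ν+2) with hDdef
  have hD : 0 < D := by rw [hDdef]; positivity
  have key1 : R n (ν+1) (ν+1) - R n ν (ν+2) = G / D := by
    rw [R, R, E1, E2, E3, E4, E5, E6, ← hgdef, hDdef]
    field_simp
    ring
  have key2 : (2*ν+1)/2 * R (n+1) ν (ν+1)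
      = ((2*ν+1) * (2*(n:ℝ)+2*ν+3) / (2*((n:ℝ)+1))) * (G / D) := by
    rw [R]
    push_cast [Nat.factorial_succ]
    rw [F1, F2, F3, F4, hDdef]
    field_simp
  rw [key1, key2]
  refine le_mul_of_one_le_left (by positivity) ?_
  rw [le_div_iff₀ (by positivity)]
  nlinarith [sq_nonneg ν, Nat.cast_nonneg (α := ℝ) n]

set_option maxHeartbeats 1600000 in
theorem stmt_12 (ν x : ℝ) (hν : 0 ≤ ν) (hx : 0 < x) :
    (besselI (ν + 1) x) ^ 2 - besselI ν x * besselI (ν + 2) x <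
      ((2 * ν + 1) / x) * besselI ν x * besselI (ν + 1) x := by
  set t := x/2 with htdef
  have ht : 0 < t := by rw [htdef]; linarith
  set u := t^2 with hudef
  have hu : 0 < u := by positivity
  set SA := ∑' n : ℕ, u ^ n * R n (ν+1) (ν+1) with hSAdef
  set SB := ∑' n : ℕ, u ^ n * R n ν (ν+2) with hSBdef
  set SP := ∑' n : ℕ, u ^ n * R n ν (ν+1) with hSPdef
  have sA : Summable (fun n : ℕ => u ^ n * R n (ν+1) (ν+1)) := summable_R hu.le (by linarith) (by linarith)
  have sB : Summable (fun n : ℕ => u ^ n * R n ν (ν+2)) := summable_R hu.le hν (by linarith)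
  have sP : Summable (fun n : ℕ => u ^ n * R n ν (ν+1)) := summable_R hu.le hν (by linarith)
  -- power identities
  have pow2 : ∀ a b : ℝ, a + b = 2*ν + 2 → t ^ a * t ^ b = t ^ (2*ν) * u := by
    intro a b hab
    rw [← Real.rpow_add ht, hab, show (2*ν+2 : ℝ) = 2*ν + ((2:ℕ):ℝ) by push_cast; ring,
        Real.rpow_add ht, Real.rpow_natCast, hudef]
  have lhs_eq : (besselI (ν + 1) x) ^ 2 - besselI ν x * besselI (ν + 2) x
      = t ^ (2*ν) * (u * (SA - SB)) := by
    rw [pow_two, bessel_mul (by linarith) (by linarith) hx, bessel_mul hν (by linarith) hx,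
        ← htdef, ← hudef, ← hSAdef, ← hSBdef,
        pow2 (ν+1) (ν+1) (by ring), pow2 ν (ν+2) (by ring)]
    ring
  have rhs_eq : ((2 * ν + 1) / x) * besselI ν x * besselI (ν + 1) x
      = t ^ (2*ν) * ((2*ν+1)/2 * SP) := by
    rw [mul_assoc, bessel_mul hν (by linarith) hx, ← htdef, ← hudef, ← hSPdef]
    have p1 : t ^ ν * t ^ (ν+1) = t ^ (2*ν) * t := by
      rw [← Real.rpow_add ht, show ν + (ν+1) = 2*ν + 1 by ring, Real.rpow_add ht,
          Real.rpow_one]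
    rw [p1]
    have hx' : x ≠ 0 := hx.ne'
    have hxt : x = 2*t := by rw [htdef]; ring
    rw [hxt]
    field_simp
  rw [lhs_eq, rhs_eq]
  have hpow : (0:ℝ) < t ^ (2*ν) := Real.rpow_pos_of_pos ht _
  rw [mul_lt_mul_iff_right₀ hpow]
  -- core inequality
  have s1 : Summable (fun n : ℕ => u ^ (n+1) * R n (ν+1) (ν+1)) :=
    (sA.mul_left u).congr fun n => by ring
  have s2 : Summable (fun n : ℕ => u ^ (n+1) * R n ν (ν+2)) :=
    (sB.mul_left u).congr fun n => by ring
  have s3 : Summable (fun n : ℕ => u ^ (n+1) * R (n+1) ν (ν+1)) :=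
    (summable_nat_add_iff 1).mpr sP
  have s4 : Summable (fun n : ℕ => u ^ (n+1) * ((2*ν+1)/2 * R (n+1) ν (ν+1))) :=
    (s3.mul_left ((2*ν+1)/2)).congr fun n => by ring
  have hdiff : u * (SA - SB) = ∑' n : ℕ, u ^ (n+1) * (R n (ν+1) (ν+1) - R n ν (ν+2)) := by
    rw [hSAdef, hSBdef, ← Summable.tsum_sub sA sB, ← tsum_mul_left]
    exact tsum_congr fun n => by ring
  have hSP : (2*ν+1)/2 * SP
      = (2*ν+1)/2 * R 0 ν (ν+1) + ∑' n : ℕ, u ^ (n+1) * ((2*ν+1)/2 * R (n+1) ν (ν+1)) := by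
    rw [hSPdef, Summable.tsum_eq_zero_add sP, mul_add, ← tsum_mul_left]
    congr 1
    · norm_num
    · exact tsum_congr fun n => by ring
  rw [hdiff, hSP]
  have step1 : ∑' n : ℕ, u ^ (n+1) * (R n (ν+1) (ν+1) - R n ν (ν+2))
      ≤ ∑' n : ℕ, u ^ (n+1) * ((2*ν+1)/2 * R (n+1) ν (ν+1)) := by
    refine Summable.tsum_le_tsum (fun n => ?_) ((s1.sub s2).congr fun n => by ring) s4
    exact mul_le_mul_of_nonneg_left (coeff_ineq n hν) (by positivity)
  have hpos0 : 0 < (2*ν+1)/2 * R 0 ν (ν+1) := by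
    have := R_pos 0 hν (by linarith : (0:ℝ) ≤ ν + 1)
    positivity
  linarith
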